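/- Let q be a prime power with q ≡ 1 (mod 3) and let η_3 be a multiplicative character of F_q of order exactly 3. Then q² · {}_3F_2(η_3, η_3, η_3; ε, ε; 1)_q = J(η_3, η_3)² − J(η_3², η_3²). -/

import Mathlib

open Finset

/-- The Jacobi sum `J(A,B) = ∑_{x ∈ F} A(x) B(1-x)` of two multiplicative characters. -/
noncomputable def jacobiSumC {F : Type} [Field F] [Fintype F]
    (A B : MulChar F ℂ) : ℂ :=
  ∑ x : F, A x * B (1 - x)

/-- Greene's binomial coefficient `(A | B) = B(-1)/q · J(A, B̄)`. -/
noncomputable def greeneBinom {F : Type} [Field F] [Fintype F]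
    (A B : MulChar F ℂ) : ℂ :=
  B (-1) / (Fintype.card F : ℂ) * jacobiSumC A B⁻¹

/-- Greene's Gaussian hypergeometric function
`_{m+1}F_m(A_0, …, A_m; B_1, …, B_m; x)_q`. -/
noncomputable def greeneF {F : Type} [Field F] [Fintype F] (m : ℕ)
    (A : Fin (m + 1) → MulChar F ℂ) (B : Fin m → MulChar F ℂ) (x : F) : ℂ :=
  letI : Fintype (MulChar F ℂ) := Fintype.ofFinite _
  (Fintype.card F : ℂ) / ((Fintype.card F : ℂ) - 1) *
    ∑ χ : MulChar F ℂ,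
      greeneBinom (A 0 * χ) χ *
        (∏ j : Fin m, greeneBinom (A j.succ * χ) (B j * χ)) * χ x


section Stmt2Aux

open Finset

set_option linter.unusedSectionVars false
set_option maxHeartbeats 2000000

namespace Stmt2Aux

variable {F : Type} [Field F] [Fintype F]

lemma eta_sq_eq_inv {η : MulChar F ℂ} (h3 : η ^ 3 = 1) : η ^ 2 = η⁻¹ :=
  eq_inv_of_mul_eq_one_left (by rw [← pow_succ]; exact h3)

lemma eta_cube_val {η : MulChar F ℂ} (h3 : η ^ 3 = 1) {x : F} (hx : x ≠ 0) :
    η x ^ 3 = 1 := by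
  rw [← MulChar.pow_apply' η (by norm_num) x, h3,
    MulChar.one_apply (isUnit_iff_ne_zero.mpr hx)]

lemma eta_neg_one {η : MulChar F ℂ} (h3 : η ^ 3 = 1) : η (-1) = 1 := by
  have h2 : η (-1) * η (-1) = 1 := by
    rw [← map_mul, neg_mul_neg, one_mul, map_one]
  have hc : η (-1) ^ 3 = 1 := eta_cube_val h3 (by norm_num)
  linear_combination hc - η (-1) * h2

lemma eta_sq_neg_one {η : MulChar F ℂ} (h3 : η ^ 3 = 1) : (η ^ 2) (-1) = 1 := by
  rw [MulChar.pow_apply' η two_ne_zero, eta_neg_one h3, one_pow]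

/-- Fourier-type evaluation: `∑ s, χ s ψ (s t) = χ⁻¹ t · g(χ)`. -/
lemma FT {χ : MulChar F ℂ} (hχ : χ ≠ 1) (ψ : AddChar F ℂ) (t : F) :
    ∑ s : F, χ s * ψ (s * t) = χ⁻¹ t * gaussSum χ ψ := by
  by_cases ht : t = 0
  · subst ht
    simp only [mul_zero, AddChar.map_zero_eq_one, mul_one]
    rw [MulChar.sum_eq_zero_of_ne_one hχ, MulChar.map_zero, zero_mul]
  · rw [← Equiv.sum_comp (Equiv.mulRight₀ t⁻¹ (inv_ne_zero ht))
      (fun s => χ s * ψ (s * t))]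
    have hstep : ∀ s : F,
        χ (Equiv.mulRight₀ t⁻¹ (inv_ne_zero ht) s)
          * ψ (Equiv.mulRight₀ t⁻¹ (inv_ne_zero ht) s * t)
        = χ t⁻¹ * (χ s * ψ s) := by
      intro s
      have h1 : (Equiv.mulRight₀ t⁻¹ (inv_ne_zero ht)) s = s * t⁻¹ := rfl
      have h2 : s * t⁻¹ * t = s := by field_simp
      rw [h1, h2, map_mul]
      ring
    rw [Finset.sum_congr rfl fun s _ => hstep s, ← Finset.mul_sum]
    have h3 : χ t⁻¹ = χ⁻¹ t := (MulChar.inv_apply' χ t).symm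
    rw [h3, gaussSum]

lemma neZeroExp : NeZero ((Monoid.exponent Fˣ : ℕ) : ℂ) :=
  ⟨Nat.cast_ne_zero.mpr Monoid.exponent_ne_zero_of_finite⟩

lemma sum_mulChar_eq_zero [Fintype (MulChar F ℂ)] {c : F} (hc1 : c ≠ 1) :
    ∑ χ : MulChar F ℂ, χ c = 0 := by
  haveI := neZeroExp (F := F)
  obtain ⟨χ₀, hχ₀⟩ := MulChar.exists_apply_ne_one_of_hasEnoughRootsOfUnity F ℂ hc1
  have key : ∑ χ : MulChar F ℂ, (χ₀ * χ) c = ∑ χ : MulChar F ℂ, χ c :=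
    Fintype.sum_bijective _ (Group.mulLeft_bijective χ₀) _ _ fun χ => rfl
  simp_rw [MulChar.mul_apply] at key
  rw [← Finset.mul_sum] at key
  have h0 : (χ₀ c - 1) * ∑ χ : MulChar F ℂ, χ c = 0 := by
    rw [sub_mul, one_mul, key, sub_self]
  exact (mul_eq_zero.mp h0).resolve_left (sub_ne_zero.mpr hχ₀)

lemma card_mulChar [Fintype (MulChar F ℂ)] :
    (Fintype.card (MulChar F ℂ) : ℂ) = (Fintype.card F : ℂ) - 1 := by
  classical
  haveI := neZeroExp (F := F)
  have h := MulChar.card_eq_card_units_of_hasEnoughRootsOfUnity F ℂ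
  rw [Nat.card_eq_fintype_card, Nat.card_eq_fintype_card] at h
  rw [h, Fintype.card_units, Nat.cast_sub Fintype.card_pos, Nat.cast_one]

lemma ortho [DecidableEq F] [Fintype (MulChar F ℂ)] (a b : F) :
    ∑ χ : MulChar F ℂ, χ a * χ⁻¹ b
      = if a = b ∧ a ≠ 0 then (Fintype.card F : ℂ) - 1 else 0 := by
  classical
  by_cases ha : a = 0
  · subst ha
    simp [MulChar.map_zero]
  · by_cases hb : b = 0
    · subst hb
      rw [if_neg (by tauto)]
      simp [MulChar.map_zero]
    · have hrw : ∀ χ : MulChar F ℂ, χ a * χ⁻¹ b = χ (a * b⁻¹) := fun χ => by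
        rw [MulChar.inv_apply', ← map_mul]
      simp_rw [hrw]
      by_cases hab : a = b
      · subst hab
        rw [mul_inv_cancel₀ hb]
        simp only [map_one]
        rw [if_pos (show True ∧ a ≠ 0 from ⟨trivial, ha⟩), Finset.sum_const,
          Finset.card_univ, nsmul_eq_mul, mul_one, card_mulChar]
      · rw [if_neg (by tauto)]
        refine sum_mulChar_eq_zero fun h => hab ?_
        field_simp at h
        exact h

noncomputable def Fp (η : MulChar F ℂ) (ψ : AddChar F ℂ) (s : F) : ℂ :=
  ∑ x : F, η x * η (1 - x) * ψ (s * x)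

noncomputable def Fm (η : MulChar F ℂ) (ψ : AddChar F ℂ) (s : F) : ℂ :=
  ∑ x : F, η x * η (1 - x) * ψ (-(s * x))

noncomputable def Gp (η : MulChar F ℂ) (ψ : AddChar F ℂ) (s : F) : ℂ :=
  ∑ t : F, η t * ψ t * η (s - t)

noncomputable def Hp (η : MulChar F ℂ) (ψ : AddChar F ℂ) (s : F) : ℂ :=
  ∑ y : F, (η ^ 2) y * (η ^ 2) (1 + y) * ψ (-(y * s))

variable {η : MulChar F ℂ} {ψ : AddChar F ℂ}

lemma sq_sq_val (h3 : η ^ 3 = 1) (z : F) : ((η ^ 2) z) ^ 2 = η z := by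
  by_cases hz : z = 0
  · subst hz; rw [MulChar.map_zero, MulChar.map_zero]; ring
  · rw [MulChar.pow_apply' η two_ne_zero]
    linear_combination η z * eta_cube_val h3 hz

lemma Fm_eq (s : F) : Fm η ψ s = ψ (-s) * Fp η ψ s := by
  rw [Fm, Fp, Finset.mul_sum,
    ← Equiv.sum_comp (Equiv.subLeft (1 : F)) (fun x => η x * η (1 - x) * ψ (-(s * x)))]
  refine Finset.sum_congr rfl fun x _ => ?_
  have h1 : Equiv.subLeft (1 : F) x = 1 - x := rfl
  have h2 : (1 : F) - (1 - x) = x := by ring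
  have h3 : -(s * (1 - x)) = -s + s * x := by ring
  rw [h1, h2, h3, AddChar.map_add_eq_mul]
  ring

lemma Fp_eq (h3 : η ^ 3 = 1) {s : F} (hs : s ≠ 0) : Fp η ψ s = η s * Gp η ψ s := by
  have hval : η s⁻¹ * η s⁻¹ = η s := by
    have H1 : η s⁻¹ * η s = 1 := by rw [← map_mul, inv_mul_cancel₀ hs, map_one]
    have H2 : η s ^ 3 = 1 := eta_cube_val h3 hs
    linear_combination (η s * (η s⁻¹ * η s + 1)) * H1 - η s⁻¹ ^ 2 * H2
  rw [Fp, Gp, Finset.mul_sum,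
    ← Equiv.sum_comp (Equiv.mulRight₀ s⁻¹ (inv_ne_zero hs))
      (fun x => η x * η (1 - x) * ψ (s * x))]
  refine Finset.sum_congr rfl fun t _ => ?_
  have h1 : (Equiv.mulRight₀ s⁻¹ (inv_ne_zero hs)) t = t * s⁻¹ := rfl
  have h2 : s * (t * s⁻¹) = t := by field_simp
  have h4 : (1 : F) - t * s⁻¹ = (s - t) * s⁻¹ := by field_simp
  rw [h1, h2, h4, map_mul, map_mul]
  linear_combination (η t * η (s - t) * ψ t) * hval

lemma Gp_zero (h3 : η ^ 3 = 1) : Gp η ψ 0 = gaussSum (η ^ 2) ψ := by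
  rw [Gp, gaussSum]
  refine Finset.sum_congr rfl fun t _ => ?_
  have h1 : (0 : F) - t = -1 * t := by ring
  rw [h1, map_mul, eta_neg_one h3, one_mul, MulChar.pow_apply' η two_ne_zero]
  ring

lemma C4 (h3 : η ^ 3 = 1) (h1 : η ≠ 1) (y : F) :
    ∑ s : F, Gp η ψ s * ψ (s * y)
      = (η ^ 2) y * (η ^ 2) (1 + y) * gaussSum η ψ ^ 2 := by
  simp only [Gp, Finset.sum_mul]
  rw [Finset.sum_comm]
  have inner : ∀ t : F, (∑ s : F, η t * ψ t * η (s - t) * ψ (s * y))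
      = η t * ψ (t * (1 + y)) * ((η ^ 2) y * gaussSum η ψ) := by
    intro t
    rw [← Equiv.sum_comp (Equiv.addRight t) (fun s => η t * ψ t * η (s - t) * ψ (s * y))]
    have hstep : ∀ m : F, η t * ψ t * η (Equiv.addRight t m - t) * ψ (Equiv.addRight t m * y)
        = (η t * ψ (t * (1 + y))) * (η m * ψ (m * y)) := by
      intro m
      have h0 : Equiv.addRight t m = m + t := rfl
      have e1 : m + t - t = m := by ring
      have e2 : (m + t) * y = m * y + t * y := by ring
      have e3 : t * (1 + y) = t + t * y := by ring
      rw [h0, e1, e2, e3, AddChar.map_add_eq_mul, AddChar.map_add_eq_mul]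
      ring
    rw [Finset.sum_congr rfl fun m _ => hstep m, ← Finset.mul_sum, FT h1 ψ y,
      ← eta_sq_eq_inv h3]
  rw [Finset.sum_congr rfl fun t _ => inner t]
  have : (∑ t : F, η t * ψ (t * (1 + y)) * ((η ^ 2) y * gaussSum η ψ))
      = ((η ^ 2) y * gaussSum η ψ) * ∑ t : F, η t * ψ (t * (1 + y)) := by
    rw [Finset.mul_sum]; exact Finset.sum_congr rfl fun t _ => by ring
  rw [this, FT h1 ψ (1 + y), ← eta_sq_eq_inv h3]
  ring

lemma C5 [DecidableEq F] (h3 : η ^ 3 = 1) (h1 : η ≠ 1) (hψ : ψ.IsPrimitive) (s : F) :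
    (Fintype.card F : ℂ) * Gp η ψ s = gaussSum η ψ ^ 2 * Hp η ψ s := by
  symm
  calc gaussSum η ψ ^ 2 * Hp η ψ s
      = ∑ y : F, ((η ^ 2) y * (η ^ 2) (1 + y) * gaussSum η ψ ^ 2) * ψ (-(y * s)) := by
        rw [Hp, Finset.mul_sum]; exact Finset.sum_congr rfl fun y _ => by ring
    _ = ∑ y : F, (∑ u : F, Gp η ψ u * ψ (u * y)) * ψ (-(y * s)) :=
        Finset.sum_congr rfl fun y _ => by rw [C4 h3 h1 y]
    _ = ∑ u : F, Gp η ψ u * ∑ y : F, ψ (y * (u - s)) := by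
        simp only [Finset.sum_mul]
        rw [Finset.sum_comm]
        refine Finset.sum_congr rfl fun u _ => ?_
        rw [Finset.mul_sum]
        refine Finset.sum_congr rfl fun y _ => ?_
        have e1 : y * (u - s) = u * y + -(y * s) := by ring
        rw [e1, AddChar.map_add_eq_mul]
        ring
    _ = ∑ u : F, Gp η ψ u * (if u - s = 0 then (Fintype.card F : ℂ) else 0) := by
        refine Finset.sum_congr rfl fun u _ => ?_
        rw [AddChar.sum_mulShift _ hψ]
        split_ifs <;> simp
    _ = (Fintype.card F : ℂ) * Gp η ψ s := by
        simp only [sub_eq_zero, mul_ite, mul_zero]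
        rw [Finset.sum_ite_eq' Finset.univ s (fun u => Gp η ψ u * (Fintype.card F : ℂ))]
        simp [mul_comm]

lemma J_alt (h3 : η ^ 3 = 1) :
    ∑ y : F, η y * η (1 + y) = jacobiSum η η := by
  rw [jacobiSum, ← Equiv.sum_comp (Equiv.neg F) (fun y => η y * η (1 + y))]
  refine Finset.sum_congr rfl fun x _ => ?_
  have h0 : Equiv.neg F x = -x := rfl
  have e1 : (1 : F) + -x = 1 - x := by ring
  have e2 : (-x : F) = -1 * x := by ring
  rw [h0, e1, e2, map_mul, eta_neg_one h3, one_mul]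

lemma C6 [DecidableEq F] (h3 : η ^ 3 = 1) (h1 : η ≠ 1) (hψ : ψ.IsPrimitive) :
    (Fintype.card F : ℂ) * (∑ s : F, ψ (-s) * Gp η ψ s ^ 2)
      = gaussSum η ψ ^ 4 * jacobiSum η η := by
  calc (Fintype.card F : ℂ) * (∑ s : F, ψ (-s) * Gp η ψ s ^ 2)
      = ∑ s : F, ψ (-s) * Gp η ψ s * ((Fintype.card F : ℂ) * Gp η ψ s) := by
        rw [Finset.mul_sum]; exact Finset.sum_congr rfl fun s _ => by ring
    _ = ∑ s : F, ψ (-s) * Gp η ψ s * (gaussSum η ψ ^ 2 * Hp η ψ s) :=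
        Finset.sum_congr rfl fun s _ => by rw [C5 h3 h1 hψ s]
    _ = gaussSum η ψ ^ 2 * ∑ y : F, (η ^ 2) y * (η ^ 2) (1 + y)
          * ∑ s : F, Gp η ψ s * ψ (s * (-(1 + y))) := by
        simp only [Hp, Finset.mul_sum]
        rw [Finset.sum_comm]
        refine Finset.sum_congr rfl fun y _ => Finset.sum_congr rfl fun s _ => ?_
        have e1 : s * (-(1 + y)) = -s + -(y * s) := by ring
        rw [e1, AddChar.map_add_eq_mul]
        ring
    _ = gaussSum η ψ ^ 2 * ∑ y : F, (η ^ 2) y * (η ^ 2) (1 + y)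
          * ((η ^ 2) (-(1 + y)) * (η ^ 2) (1 + -(1 + y)) * gaussSum η ψ ^ 2) := by
        refine congrArg _ (Finset.sum_congr rfl fun y _ => ?_)
        rw [C4 h3 h1 (-(1 + y))]
    _ = gaussSum η ψ ^ 4 * ∑ y : F, η y * η (1 + y) := by
        rw [Finset.mul_sum, Finset.mul_sum]
        refine Finset.sum_congr rfl fun y _ => ?_
        have e1 : (1 : F) + -(1 + y) = -1 * y := by ring
        have e2 : (-(1 + y) : F) = -1 * (1 + y) := by ring
        rw [e1, e2, map_mul, map_mul, eta_sq_neg_one h3]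
        have s1 := sq_sq_val h3 y
        have s2 := sq_sq_val h3 (1 + y)
        linear_combination (gaussSum η ψ ^ 4 * ((η ^ 2) (1 + y)) ^ 2) * s1
          + (gaussSum η ψ ^ 4 * η y) * s2
    _ = gaussSum η ψ ^ 4 * jacobiSum η η := by rw [J_alt h3]

lemma L2 (h3 : η ^ 3 = 1) (h1 : η ≠ 1) :
    gaussSum η ψ * (∑ x : F, ∑ y : F,
        η x * η (1 - x) * η y * η (1 - y) * (η ^ 2) (x - y))
      = ∑ s : F, η s * (Fp η ψ s * Fm η ψ s) := by
  calc gaussSum η ψ * (∑ x : F, ∑ y : F,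
        η x * η (1 - x) * η y * η (1 - y) * (η ^ 2) (x - y))
      = ∑ x : F, ∑ y : F, (η x * η (1 - x)) * (η y * η (1 - y))
          * ((η ^ 2) (x - y) * gaussSum η ψ) := by
        rw [Finset.mul_sum]
        refine Finset.sum_congr rfl fun x _ => ?_
        rw [Finset.mul_sum]
        exact Finset.sum_congr rfl fun y _ => by ring
    _ = ∑ x : F, ∑ y : F, (η x * η (1 - x)) * (η y * η (1 - y))
          * (∑ s : F, η s * ψ (s * (x - y))) := by
        refine Finset.sum_congr rfl fun x _ => Finset.sum_congr rfl fun y _ => ?_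
        rw [FT h1 ψ (x - y), ← eta_sq_eq_inv h3]
    _ = ∑ x : F, ∑ y : F, ∑ s : F,
          η s * (η x * η (1 - x) * ψ (s * x)) * (η y * η (1 - y) * ψ (-(s * y))) := by
        refine Finset.sum_congr rfl fun x _ => Finset.sum_congr rfl fun y _ => ?_
        rw [Finset.mul_sum]
        refine Finset.sum_congr rfl fun s _ => ?_
        have e1 : s * (x - y) = s * x + -(s * y) := by ring
        rw [e1, AddChar.map_add_eq_mul]
        ring
    _ = ∑ x : F, ∑ s : F, ∑ y : F,
          η s * (η x * η (1 - x) * ψ (s * x)) * (η y * η (1 - y) * ψ (-(s * y))) :=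
        Finset.sum_congr rfl fun x _ => Finset.sum_comm
    _ = ∑ s : F, ∑ x : F, ∑ y : F,
          η s * (η x * η (1 - x) * ψ (s * x)) * (η y * η (1 - y) * ψ (-(s * y))) :=
        Finset.sum_comm
    _ = ∑ s : F, η s * (Fp η ψ s * Fm η ψ s) := by
        refine Finset.sum_congr rfl fun s _ => ?_
        rw [Fp, Fm, Finset.sum_mul_sum, Finset.mul_sum]
        refine Finset.sum_congr rfl fun x _ => ?_
        rw [Finset.mul_sum]
        exact Finset.sum_congr rfl fun y _ => by ring

lemma L5 (h3 : η ^ 3 = 1) :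
    ∑ s : F, η s * (Fp η ψ s * Fm η ψ s)
      = (∑ s : F, ψ (-s) * Gp η ψ s ^ 2) - Gp η ψ 0 ^ 2 := by
  classical
  have hpt : ∀ s : F, s ≠ 0 →
      η s * (Fp η ψ s * Fm η ψ s) = ψ (-s) * Gp η ψ s ^ 2 := by
    intro s hs
    rw [Fm_eq, Fp_eq h3 hs]
    have hc : η s ^ 3 = 1 := eta_cube_val h3 hs
    linear_combination (ψ (-s) * Gp η ψ s ^ 2) * hc
  rw [Finset.sum_eq_sum_sdiff_singleton_add (mem_univ (0 : F))
      (fun s => η s * (Fp η ψ s * Fm η ψ s)),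
    Finset.sum_eq_sum_sdiff_singleton_add (mem_univ (0 : F))
      (fun s => ψ (-s) * Gp η ψ s ^ 2)]
  rw [MulChar.map_zero, zero_mul, add_zero, neg_zero, AddChar.map_zero_eq_one, one_mul]
  rw [Finset.sum_congr rfl fun s hs =>
    hpt s (Finset.notMem_singleton.mp (Finset.mem_sdiff.mp hs).2)]
  ring

lemma stepC [DecidableEq F] (h3 : η ^ 3 = 1) (h1 : η ≠ 1) (h2 : η ^ 2 ≠ 1)
    (hψ : ψ.IsPrimitive) :
    (∑ x : F, ∑ y : F, η x * η (1 - x) * η y * η (1 - y) * (η ^ 2) (1 - x - y))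
      = jacobiSum η η ^ 2 - jacobiSum (η ^ 2) (η ^ 2) := by
  set q : ℂ := (Fintype.card F : ℂ) with hqdef
  set g : ℂ := gaussSum η ψ with hgdef
  set g2 : ℂ := gaussSum (η ^ 2) ψ with hg2def
  set J : ℂ := jacobiSum η η with hJdef
  set J2 : ℂ := jacobiSum (η ^ 2) (η ^ 2) with hJ2def
  have hq0 : q ≠ 0 := Nat.cast_ne_zero.mpr Fintype.card_ne_zero
  have hg0 : g ≠ 0 := gaussSum_ne_zero_of_nontrivial hq0 h1 hψ
  have h4 : η ^ 2 * η ^ 2 = η := by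
    rw [← pow_add]
    rw [show (2 + 2 : ℕ) = 3 + 1 from rfl, pow_succ, h3, one_mul]
  have hA : g2 * J = g ^ 2 := by
    have h := jacobiSum_mul_nontrivial (χ := η) (φ := η) (by rw [← sq]; exact h2) ψ
    rw [← sq] at h
    rw [hg2def, hJdef, hgdef, sq (gaussSum η ψ)]
    exact h
  have hB : g * J2 = g2 ^ 2 := by
    have h := jacobiSum_mul_nontrivial (χ := η ^ 2) (φ := η ^ 2) (by rw [h4]; exact h1) ψ
    rw [h4] at h
    rw [hgdef, hJ2def, hg2def, sq (gaussSum (η ^ 2) ψ)]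
    exact h
  have hC : g * g2 = q := by
    have h := gaussSum_mul_gaussSum_eq_card h1 hψ
    have h2' := mul_gaussSum_inv_eq_gaussSum η⁻¹ ψ
    rw [← eta_sq_eq_inv h3] at h h2'
    rw [eta_sq_neg_one h3, one_mul] at h2'
    rw [h2'] at h
    exact h
  have main1 : (∑ x : F, ∑ y : F, η x * η (1 - x) * η y * η (1 - y) * (η ^ 2) (1 - x - y))
      = ∑ x : F, ∑ y : F, η x * η (1 - x) * η y * η (1 - y) * (η ^ 2) (x - y) := by
    refine Finset.sum_congr rfl fun x _ => ?_
    rw [← Equiv.sum_comp (Equiv.subLeft (1 : F))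
      (fun y => η x * η (1 - x) * η y * η (1 - y) * (η ^ 2) (x - y))]
    refine Finset.sum_congr rfl fun y _ => ?_
    have h0 : Equiv.subLeft (1 : F) y = 1 - y := rfl
    have e1 : (1 : F) - (1 - y) = y := by ring
    have e2 : (x : F) - (1 - y) = -1 * (1 - x - y) := by ring
    rw [h0, e1, e2, map_mul, eta_sq_neg_one h3, one_mul]
    ring
  have key : q * (g * (∑ x : F, ∑ y : F,
      η x * η (1 - x) * η y * η (1 - y) * (η ^ 2) (1 - x - y))) = q * (g * (J ^ 2 - J2)) := by
    calc q * (g * (∑ x : F, ∑ y : F,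
        η x * η (1 - x) * η y * η (1 - y) * (η ^ 2) (1 - x - y)))
        = q * ((∑ s : F, ψ (-s) * Gp η ψ s ^ 2) - g2 ^ 2) := by
          rw [main1, L2 h3 h1, L5 h3, Gp_zero h3]
      _ = g ^ 4 * J - q * g2 ^ 2 := by
          rw [mul_sub]
          congr 1
          exact C6 h3 h1 hψ
      _ = q * (g * (J ^ 2 - J2)) := by
          linear_combination (-(g ^ 2 * J)) * hA + (g * J ^ 2) * hC + q * hB
  have hqg := mul_left_cancel₀ hq0 key
  exact mul_left_cancel₀ hg0 hqg

lemma stepB [DecidableEq F] (h3 : η ^ 3 = 1) (h1 : η ≠ 1) (x y : F) :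
    (∑ z : F, if z * (1 - x - y) = (1 - x) * (1 - y) then η x * η y * η z else 0)
      = η x * η (1 - x) * η y * η (1 - y) * (η ^ 2) (1 - x - y) := by
  by_cases hd : 1 - x - y = 0
  · rw [hd, MulChar.map_zero, mul_zero]
    by_cases hc : (1 - x) * (1 - y) = 0
    · rw [Finset.sum_congr rfl fun z _ => if_pos (by rw [mul_zero]; exact hc.symm)]
      rw [← Finset.mul_sum, MulChar.sum_eq_zero_of_ne_one h1, mul_zero]
    · rw [Finset.sum_congr rfl fun z _ =>
        if_neg (fun h => hc (by rw [mul_zero] at h; exact h.symm))]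
      rw [Finset.sum_const_zero]
  · have hcond : ∀ z : F, (z * (1 - x - y) = (1 - x) * (1 - y))
        ↔ (z = (1 - x) * (1 - y) / (1 - x - y)) := fun z => (eq_div_iff hd).symm
    rw [Finset.sum_congr rfl fun z _ => if_congr (hcond z) rfl rfl]
    rw [Finset.sum_ite_eq' Finset.univ ((1 - x) * (1 - y) / (1 - x - y))
      (fun z => η x * η y * η z)]
    rw [if_pos (Finset.mem_univ _)]
    rw [div_eq_mul_inv, map_mul, map_mul]
    have hinv : η (1 - x - y)⁻¹ = (η ^ 2) (1 - x - y) := by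
      rw [← MulChar.inv_apply', ← eta_sq_eq_inv h3]
    rw [hinv]
    ring

end Stmt2Aux

end Stmt2Aux

open Stmt2Aux in
/-- If `q ≡ 1 (mod 3)` and `η₃` has order exactly `3`, then
`q² · ₃F₂(η₃,η₃,η₃; ε,ε; 1)_q = J(η₃,η₃)² − J(η₃²,η₃²)`. -/
theorem stmt_2 {F : Type} [Field F] [Fintype F]
    (p e : ℕ) (hp : p.Prime) (he : 0 < e) (hcard : Fintype.card F = p ^ e)
    (hq : Fintype.card F % 3 = 1)
    (η₃ : MulChar F ℂ) (hη₃ : orderOf η₃ = 3) :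
    (Fintype.card F : ℂ) ^ 2 * greeneF 2 (fun _ => η₃) (fun _ => 1) 1
      = jacobiSumC η₃ η₃ ^ 2 - jacobiSumC (η₃ ^ 2) (η₃ ^ 2) := by
  classical
  have h3 : η₃ ^ 3 = 1 := by rw [← hη₃]; exact pow_orderOf_eq_one η₃
  have h1 : η₃ ≠ 1 := by
    intro h; rw [h, orderOf_one] at hη₃; norm_num at hη₃
  have h2 : η₃ ^ 2 ≠ 1 := by
    intro h
    have hdvd := orderOf_dvd_of_pow_eq_one h
    rw [hη₃] at hdvd
    norm_num at hdvd
  letI : Fintype (MulChar F ℂ) := Fintype.ofFinite _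
  set ψ : AddChar F ℂ := AddChar.FiniteField.primitiveChar_to_Complex F with hψdef
  have hψ : ψ.IsPrimitive := AddChar.FiniteField.primitiveChar_to_Complex_isPrimitive F
  have hq0 : (Fintype.card F : ℂ) ≠ 0 := Nat.cast_ne_zero.mpr Fintype.card_ne_zero
  have hq1 : (Fintype.card F : ℂ) - 1 ≠ 0 := by
    rw [sub_ne_zero]
    intro h
    have h' : Fintype.card F = 1 := by exact_mod_cast h
    have := Fintype.one_lt_card (α := F)
    omega
  -- the per-χ jacobi sum
  have hsq : ∀ χ : MulChar F ℂ, χ (-1) * χ (-1) = 1 := fun χ => by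
    rw [← map_mul, neg_mul_neg, one_mul, map_one]
  have hterm : ∀ χ : MulChar F ℂ,
      greeneBinom (η₃ * χ) χ * (∏ _j : Fin 2, greeneBinom (η₃ * χ) (1 * χ)) * χ 1
        = χ (-1) * (∑ x : F, (η₃ * χ) x * χ⁻¹ (1 - x)) ^ 3 / (Fintype.card F : ℂ) ^ 3 := by
    intro χ
    rw [one_mul, map_one, mul_one, Finset.prod_const, Finset.card_univ, Fintype.card_fin]
    rw [greeneBinom, jacobiSumC]
    have h := hsq χ
    set S : ℂ := ∑ x : F, (η₃ * χ) x * χ⁻¹ (1 - x) with hSdef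
    field_simp
    linear_combination (χ (-1) * S ^ 3) * h
  have cube : ∀ f : F → ℂ, (∑ x : F, f x) ^ 3
      = ∑ x : F, ∑ y : F, ∑ z : F, f x * f y * f z := by
    intro f
    calc (∑ x : F, f x) ^ 3 = ((∑ x : F, f x) * (∑ y : F, f y)) * (∑ z : F, f z) := by ring
      _ = (∑ x : F, ∑ y : F, f x * f y) * (∑ z : F, f z) := by rw [Finset.sum_mul_sum]
      _ = ∑ x : F, ∑ y : F, ∑ z : F, f x * f y * f z := by
          rw [Finset.sum_mul]
          refine Finset.sum_congr rfl fun x _ => ?_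
          rw [Finset.sum_mul]
          refine Finset.sum_congr rfl fun y _ => ?_
          rw [Finset.mul_sum]
  have stepA : (Fintype.card F : ℂ) ^ 2 * greeneF 2 (fun _ => η₃) (fun _ => 1) 1
      = ∑ x : F, ∑ y : F, ∑ z : F,
          (if z * (1 - x - y) = (1 - x) * (1 - y) then η₃ x * η₃ y * η₃ z else 0) := by
    rw [show greeneF 2 (fun _ => η₃) (fun _ => 1) 1
        = (Fintype.card F : ℂ) / ((Fintype.card F : ℂ) - 1) *
          ∑ χ : MulChar F ℂ, greeneBinom (η₃ * χ) χ *
            (∏ _j : Fin 2, greeneBinom (η₃ * χ) (1 * χ)) * χ 1 from rfl]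
    simp only [hterm]
    rw [← Finset.sum_div]
    have hconst : ∀ X : ℂ, (Fintype.card F : ℂ) ^ 2 * ((Fintype.card F : ℂ)
        / ((Fintype.card F : ℂ) - 1) * (X / (Fintype.card F : ℂ) ^ 3))
        = X / ((Fintype.card F : ℂ) - 1) := by
      intro X; field_simp
    rw [hconst]
    have hexp : ∀ χ : MulChar F ℂ, χ (-1) * (∑ x : F, (η₃ * χ) x * χ⁻¹ (1 - x)) ^ 3
        = ∑ x : F, ∑ y : F, ∑ z : F, χ (-1) * (((η₃ * χ) x * χ⁻¹ (1 - x))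
            * ((η₃ * χ) y * χ⁻¹ (1 - y)) * ((η₃ * χ) z * χ⁻¹ (1 - z))) := by
      intro χ
      rw [cube]
      rw [Finset.mul_sum]
      refine Finset.sum_congr rfl fun x _ => ?_
      rw [Finset.mul_sum]
      refine Finset.sum_congr rfl fun y _ => ?_
      rw [Finset.mul_sum]
    simp only [hexp]
    rw [Finset.sum_comm]
    rw [Finset.sum_congr rfl fun x _ => Finset.sum_comm]
    rw [Finset.sum_congr rfl fun (x : F) _ => Finset.sum_congr rfl
      fun (y : F) _ => Finset.sum_comm]
    rw [Finset.sum_div]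
    refine Finset.sum_congr rfl fun x _ => ?_
    rw [Finset.sum_div]
    refine Finset.sum_congr rfl fun y _ => ?_
    rw [Finset.sum_div]
    refine Finset.sum_congr rfl fun z _ => ?_
    have hinner : ∑ χ : MulChar F ℂ, χ (-1) * (((η₃ * χ) x * χ⁻¹ (1 - x))
          * ((η₃ * χ) y * χ⁻¹ (1 - y)) * ((η₃ * χ) z * χ⁻¹ (1 - z)))
        = (η₃ x * η₃ y * η₃ z) * ∑ χ : MulChar F ℂ,
            χ (-(x * y * z)) * χ⁻¹ ((1 - x) * ((1 - y) * (1 - z))) := by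
      rw [Finset.mul_sum]
      refine Finset.sum_congr rfl fun χ _ => ?_
      simp only [MulChar.mul_apply]
      have c1 : χ (-(x * y * z)) = χ (-1) * χ x * χ y * χ z := by
        rw [show -(x * y * z) = -1 * x * y * z from by ring, map_mul, map_mul, map_mul]
      have c2 : χ⁻¹ ((1 - x) * ((1 - y) * (1 - z)))
          = χ⁻¹ (1 - x) * (χ⁻¹ (1 - y) * χ⁻¹ (1 - z)) := by
        rw [map_mul, map_mul]
      rw [c1, c2]
      ring
    rw [hinner, ortho]
    by_cases h0 : x * y * z = 0
    · have hz : η₃ x * η₃ y * η₃ z = 0 := by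
        rcases mul_eq_zero.mp h0 with h | h
        · rcases mul_eq_zero.mp h with h' | h' <;> rw [h'] <;> simp [MulChar.map_zero]
        · rw [h]; simp [MulChar.map_zero]
      rw [hz]
      simp
    · have hcond : ((-(x * y * z) = (1 - x) * ((1 - y) * (1 - z))) ∧ -(x * y * z) ≠ 0)
          ↔ (z * (1 - x - y) = (1 - x) * (1 - y)) := by
        constructor
        · rintro ⟨h, -⟩; linear_combination h
        · intro h; exact ⟨by linear_combination h, neg_ne_zero.mpr h0⟩
      rw [if_congr hcond rfl rfl]
      by_cases hcc : z * (1 - x - y) = (1 - x) * (1 - y)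
      · rw [if_pos hcc, if_pos hcc]
        field_simp
      · rw [if_neg hcc, if_neg hcc]
        simp
  rw [stepA]
  rw [Finset.sum_congr rfl fun (x : F) _ => Finset.sum_congr rfl
    fun (y : F) _ => stepB h3 h1 x y]
  rw [stepC h3 h1 h2 hψ]
  rfl
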